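/- (Perron's Satz 2) Let p be a prime with p ≡ 3 (mod 4) and let a be an integer coprime to p. Let N be the set of quadratic non-residues mod p, of size (p−1)/2. Then among the elements n + a for n ∈ N, exactly (p+1)/4 are 'Reste' (i.e. 0 or a quadratic residue) and exactly (p−3)/4 are non-residues. -/

import Mathlib

open Finset

private lemma perron_sum_shift {p : ℕ} [Fact p.Prime] (hF : ringChar (ZMod p) ≠ 2)
    (a : ZMod p) : ∑ n : ZMod p, quadraticChar (ZMod p) (n + a) = 0 := by
  exact (Fintype.sum_equiv (Equiv.addRight a) _ (quadraticChar (ZMod p))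
    (fun n => rfl)).trans (quadraticChar_sum_zero hF)

private lemma perron_sum_mul {p : ℕ} [Fact p.Prime] (hF : ringChar (ZMod p) ≠ 2)
    (a : ZMod p) (ha : a ≠ 0) :
    ∑ n : ZMod p, quadraticChar (ZMod p) n * quadraticChar (ZMod p) (n + a) = -1 := by
  set χ := quadraticChar (ZMod p) with hχ
  have h0 : χ (0 : ZMod p) * χ (0 + a) = 0 := by simp [hχ]
  rw [← Finset.sum_erase (f := fun n => χ n * χ (n + a)) Finset.univ h0]
  have step : ∀ n ∈ Finset.univ.erase (0 : ZMod p),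
      χ n * χ (n + a) = χ (1 + a * n⁻¹) := by
    intro n hn
    have hn0 : n ≠ 0 := Finset.ne_of_mem_erase hn
    have hfac : n * (n + a) = n ^ 2 * (1 + a * n⁻¹) := by
      field_simp
    rw [← map_mul, hfac, map_mul, quadraticChar_sq_one' hn0, one_mul]
  rw [Finset.sum_congr rfl step]
  have hbij : ∑ n ∈ Finset.univ.erase (0 : ZMod p), χ (1 + a * n⁻¹)
      = ∑ y ∈ Finset.univ.erase (1 : ZMod p), χ y := by
    apply Finset.sum_nbij' (fun n => 1 + a * n⁻¹) (fun y => a * (y - 1)⁻¹)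
    · intro n hn
      have hn0 : n ≠ 0 := Finset.ne_of_mem_erase hn
      simp only [Finset.mem_erase, Finset.mem_univ, and_true]
      intro h
      have : a * n⁻¹ = 0 := by linear_combination h
      rcases mul_eq_zero.mp this with h' | h'
      · exact ha h'
      · exact hn0 (inv_eq_zero.mp h')
    · intro y hy
      have hy1 : y ≠ 1 := Finset.ne_of_mem_erase hy
      simp only [Finset.mem_erase, Finset.mem_univ, and_true]
      intro h
      rcases mul_eq_zero.mp h with h' | h'
      · exact ha h'
      · exact hy1 (by
          have := inv_eq_zero.mp h'
          have : y = 1 := by linear_combination this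
          exact this)
    · intro n hn
      have hn0 : n ≠ 0 := Finset.ne_of_mem_erase hn
      field_simp
      rw [add_sub_cancel_left, div_self ha]
    · intro y hy
      have hy1 : y ≠ 1 := Finset.ne_of_mem_erase hy
      have hy1' : y - 1 ≠ 0 := sub_ne_zero.mpr hy1
      field_simp
      ring
    · intro n hn
      rfl
  rw [hbij, Finset.sum_erase_eq_sub (Finset.mem_univ 1), quadraticChar_sum_zero hF]
  simp [hχ]

open Classical in
/-- Perron's Satz 2: for a prime p ≡ 3 (mod 4) and a coprime to p,
the set N of quadratic non-residues has (p−1)/2 elements, and among the shifted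
elements n + a for n ∈ N, exactly (p+1)/4 are "Reste" (0 or a quadratic residue)
and exactly (p−3)/4 are non-residues. -/
theorem perron_satz2 (p : ℕ) [NeZero p] (hp : p.Prime) (hp4 : p % 4 = 3)
    (a : ZMod p) (ha : a ≠ 0) :
    (Finset.univ.filter (fun n : ZMod p => n ≠ 0 ∧ ¬IsSquare n)).card = (p - 1) / 2 ∧
    (Finset.univ.filter (fun n : ZMod p =>
        (n ≠ 0 ∧ ¬IsSquare n) ∧ (n + a = 0 ∨ IsSquare (n + a)))).card = (p + 1) / 4 ∧
    (Finset.univ.filter (fun n : ZMod p =>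
        (n ≠ 0 ∧ ¬IsSquare n) ∧ (n + a ≠ 0 ∧ ¬IsSquare (n + a)))).card = (p - 3) / 4 := by
  haveI : Fact p.Prime := ⟨hp⟩
  have hF : ringChar (ZMod p) ≠ 2 := by
    rw [ZMod.ringChar_zmod_n]; omega
  set χ := quadraticChar (ZMod p) with hχ
  have tri : ∀ n : ZMod p, χ n = 0 ∨ χ n = 1 ∨ χ n = -1 := quadraticChar_isQuadratic (ZMod p)
  have hiff1 : ∀ n : ZMod p, (n ≠ 0 ∧ ¬IsSquare n) ↔ χ n = -1 := by
    intro n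
    rw [hχ, quadraticChar_neg_one_iff_not_isSquare]
    constructor
    · exact fun h => h.2
    · exact fun h => ⟨fun h0 => h (h0 ▸ ⟨0, by ring⟩), h⟩
  have hiff2 : ∀ m : ZMod p, (m = 0 ∨ IsSquare m) ↔ ¬(χ m = -1) := by
    intro m
    rw [hχ, quadraticChar_neg_one_iff_not_isSquare, not_not]
    constructor
    · rintro (h0 | h)
      · exact h0 ▸ ⟨0, by ring⟩
      · exact h
    · exact Or.inr
  -- the three sets in χ-form
  have eq1 : (Finset.univ.filter (fun n : ZMod p => n ≠ 0 ∧ ¬IsSquare n))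
      = Finset.univ.filter (fun n : ZMod p => χ n = -1) := by
    ext n; simp only [Finset.mem_filter, Finset.mem_univ, true_and, hiff1]
  have eq2 : (Finset.univ.filter (fun n : ZMod p =>
        (n ≠ 0 ∧ ¬IsSquare n) ∧ (n + a = 0 ∨ IsSquare (n + a))))
      = Finset.univ.filter (fun n : ZMod p => χ n = -1 ∧ ¬(χ (n + a) = -1)) := by
    ext n; simp only [Finset.mem_filter, Finset.mem_univ, true_and, hiff1, hiff2]
  have eq3 : (Finset.univ.filter (fun n : ZMod p =>
        (n ≠ 0 ∧ ¬IsSquare n) ∧ (n + a ≠ 0 ∧ ¬IsSquare (n + a))))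
      = Finset.univ.filter (fun n : ZMod p => χ n = -1 ∧ χ (n + a) = -1) := by
    ext n; simp only [Finset.mem_filter, Finset.mem_univ, true_and, hiff1]
  rw [eq1, eq2, eq3]
  set C1 := (Finset.univ.filter (fun n : ZMod p => χ n = -1)).card with hC1
  set C2 := (Finset.univ.filter (fun n : ZMod p => χ n = -1 ∧ ¬(χ (n + a) = -1))).card with hC2
  set C3 := (Finset.univ.filter (fun n : ZMod p => χ n = -1 ∧ χ (n + a) = -1)).card with hC3
  -- partition
  have hpart : C3 + C2 = C1 := by
    rw [hC1, hC2, hC3, ← Finset.filter_filter, ← Finset.filter_filter]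
    exact Finset.card_filter_add_card_filter_not (fun n => χ (n + a) = -1)
  -- basic sum facts
  have hsq : ∀ n : ZMod p, χ n ^ 2 = if n = 0 then 0 else 1 := by
    intro n
    by_cases h0 : n = 0
    · simp [h0, hχ]
    · rw [if_neg h0]
      rcases tri n with h | h | h
      · exact absurd (quadraticChar_eq_zero_iff.mp h) h0
      · rw [h]; ring
      · rw [h]; ring
  have hcardF : (Fintype.card (ZMod p) : ℤ) = (p : ℤ) := by rw [ZMod.card]
  have hsum_sq : ∑ n : ZMod p, χ n ^ 2 = (p : ℤ) - 1 := by
    have : ∀ n : ZMod p, χ n ^ 2 = 1 - (if n = 0 then 1 else 0) := by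
      intro n; rw [hsq n]; split_ifs <;> ring
    rw [Finset.sum_congr rfl (fun n _ => this n), Finset.sum_sub_distrib]
    simp [Finset.card_univ, ZMod.card]
  have hsum0 : ∑ n : ZMod p, χ n = 0 := quadraticChar_sum_zero hF
  have hshift : ∑ n : ZMod p, χ (n + a) = 0 := perron_sum_shift hF a
  have hmul : ∑ n : ZMod p, χ n * χ (n + a) = -1 := perron_sum_mul hF a ha
  have hneg1 : χ (-1) = -1 := by
    rw [hχ, quadraticChar_neg_one hF, ZMod.card, ZMod.χ₄_nat_eq_if_mod_four]
    have h2 : p % 2 = 1 := by omega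
    rw [if_neg (by omega), if_neg (by omega)]
  -- key identity for C1
  have key1 : 2 * (C1 : ℤ) = (p : ℤ) - 1 := by
    rw [hC1, Finset.card_filter]
    push_cast
    rw [Finset.mul_sum]
    have : ∀ n : ZMod p, 2 * (if χ n = -1 then (1 : ℤ) else 0) = χ n ^ 2 - χ n := by
      intro n
      rcases tri n with h | h | h <;> rw [h] <;> norm_num
    rw [Finset.sum_congr rfl (fun n _ => this n), Finset.sum_sub_distrib, hsum_sq, hsum0]
    ring
  -- key identity for C3
  have key3 : 4 * (C3 : ℤ) = (p : ℤ) - 3 := by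
    rw [hC3, Finset.card_filter]
    push_cast
    rw [Finset.mul_sum]
    have step : ∀ n : ZMod p, 4 * (if χ n = -1 ∧ χ (n + a) = -1 then (1 : ℤ) else 0)
        = (χ n ^ 2 - χ n) * (χ (n + a) ^ 2 - χ (n + a)) := by
      intro n
      rcases tri n with h | h | h <;> rcases tri (n + a) with h' | h' | h' <;>
        rw [h, h'] <;> norm_num
    rw [Finset.sum_congr rfl (fun n _ => step n)]
    have expand : ∀ n : ZMod p, (χ n ^ 2 - χ n) * (χ (n + a) ^ 2 - χ (n + a))
        = χ n ^ 2 * χ (n + a) ^ 2 - χ n ^ 2 * χ (n + a) - χ n * χ (n + a) ^ 2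
          + χ n * χ (n + a) := by intro n; ring
    rw [Finset.sum_congr rfl (fun n _ => expand n)]
    rw [Finset.sum_add_distrib, Finset.sum_sub_distrib, Finset.sum_sub_distrib]
    have T1 : ∑ n : ZMod p, χ n ^ 2 * χ (n + a) ^ 2 = (p : ℤ) - 2 := by
      have pt : ∀ n : ZMod p, χ n ^ 2 * χ (n + a) ^ 2
          = 1 - (if n = 0 then 1 else 0) - (if n = -a then 1 else 0) := by
        intro n
        have hna : (n + a = 0) ↔ (n = -a) := by
          constructor <;> intro h <;> [linear_combination h; linear_combination h]
        rw [hsq n, hsq (n + a)]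
        simp only [hna]
        by_cases h1 : n = 0 <;> by_cases h2 : n = -a
        · exfalso; apply ha; rw [h1] at h2; linear_combination h2
        · simp [h1, h2, ha]
        · simp [h1, h2, ha]
        · simp [h1, h2, ha]
      rw [Finset.sum_congr rfl (fun n _ => pt n), Finset.sum_sub_distrib,
        Finset.sum_sub_distrib]
      simp [Finset.card_univ, ZMod.card, Finset.sum_ite_eq']
      ring
    have T2 : ∑ n : ZMod p, χ n ^ 2 * χ (n + a) = -χ a := by
      have pt : ∀ n : ZMod p, χ n ^ 2 * χ (n + a)
          = χ (n + a) - (if n = 0 then χ a else 0) := by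
        intro n
        rw [hsq n]
        by_cases h1 : n = 0
        · simp [h1]
        · simp [h1]
      rw [Finset.sum_congr rfl (fun n _ => pt n), Finset.sum_sub_distrib, hshift]
      simp [Finset.sum_ite_eq']
    have T3 : ∑ n : ZMod p, χ n * χ (n + a) ^ 2 = -χ (-a) := by
      have pt : ∀ n : ZMod p, χ n * χ (n + a) ^ 2
          = χ n - (if n = -a then χ (-a) else 0) := by
        intro n
        have hna : (n + a = 0) ↔ (n = -a) := by
          constructor <;> intro h <;> [linear_combination h; linear_combination h]
        rw [hsq (n + a)]
        simp only [hna]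
        by_cases h1 : n = -a
        · simp [h1]
        · simp [h1]
      rw [Finset.sum_congr rfl (fun n _ => pt n), Finset.sum_sub_distrib, hsum0]
      simp [Finset.sum_ite_eq']
    have hnegaa : χ (-a) = -χ a := by
      have : (-a : ZMod p) = -1 * a := by ring
      rw [this, map_mul, hneg1]; ring
    rw [T1, T2, T3, hmul, hnegaa]
    ring
  obtain ⟨k, hk⟩ : ∃ k, p = 4 * k + 3 := ⟨p / 4, by omega⟩
  refine ⟨?_, ?_, ?_⟩
  · omega
  · omega
  · omega
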